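/- Let E, F be orthogonal projections on a separable complex Hilbert space H whose ranges have the same (possibly infinite) Hilbert dimension. Assume: (a) E∧F = 0; (b) for every unit vector e ∈ ran E one has Fe ≠ 0, and for every unit vector f ∈ ran F one has Ef ≠ 0; (c) the positive operator EFE restricted to ran E has pure point spectrum, i.e. ran E admits an orthonormal basis of eigenvectors of EFE. Then there exists an orthonormal basis {e_j : j ∈ J} of ran E (so that E = ∑_j P_{e_j}, strongly convergent) such that the vectors f_j := Fe_j/‖Fe_j‖ form an orthonormal basis of ran F (so that F = ∑_j P_{f_j}, strongly convergent) and P_{f_j}P_{e_k} = 0 for all j ≠ k while P_{f_j}P_{e_j} ≠ 0 for all j; moreover, given the decomposition {P_{e_j}}, the decomposition {P_{f_j}} of F with these properties is unique. -/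

import Mathlib

/-- An orthogonal projection: a bounded idempotent self-adjoint operator. -/
def IsOrthogonalProjection {H : Type*} [NormedAddCommGroup H] [InnerProductSpace ℂ H]
    [CompleteSpace H] (E : H →L[ℂ] H) : Prop :=
  IsSelfAdjoint E ∧ E * E = E

/-- The rank-one orthogonal projection `P_x : z ↦ ⟪x, z⟫ • x` determined by a (unit) vector
`x`. -/
noncomputable def rankOneProj {H : Type*} [NormedAddCommGroup H] [InnerProductSpace ℂ H]
    (x : H) : H →L[ℂ] H :=
  (innerSL ℂ x).smulRight x

section Aux

variable {H : Type*} [NormedAddCommGroup H] [InnerProductSpace ℂ H] [CompleteSpace H]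

local notation "⟪" x ", " y "⟫" => @inner ℂ _ _ x y

lemma IsOrthogonalProjection.symm {E : H →L[ℂ] H} (hE : IsOrthogonalProjection E)
    (x y : H) : ⟪E x, y⟫ = ⟪x, E y⟫ :=
  (ContinuousLinearMap.isSelfAdjoint_iff_isSymmetric.mp hE.1) x y

lemma IsOrthogonalProjection.idem {E : H →L[ℂ] H} (hE : IsOrthogonalProjection E)
    (x : H) : E (E x) = E x := by
  have := congrArg (fun T : H →L[ℂ] H => T x) hE.2
  simpa [ContinuousLinearMap.mul_apply] using this

lemma IsOrthogonalProjection.mem_range_iff {E : H →L[ℂ] H} (hE : IsOrthogonalProjection E)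
    {x : H} : x ∈ LinearMap.range (E : H →ₗ[ℂ] H) ↔ E x = x := by
  constructor
  · rintro ⟨y, rfl⟩
    exact hE.idem y
  · intro h
    exact ⟨x, h⟩

lemma IsOrthogonalProjection.range_isClosed {E : H →L[ℂ] H} (hE : IsOrthogonalProjection E) :
    IsClosed ((LinearMap.range (E : H →ₗ[ℂ] H)) : Set H) := by
  have : ((LinearMap.range (E : H →ₗ[ℂ] H)) : Set H) = {x | E x = x} := by
    ext x
    exact hE.mem_range_iff
  rw [this]
  exact isClosed_eq E.continuous continuous_id

lemma rankOneProj_apply (x z : H) : rankOneProj x z = ⟪x, z⟫ • x := rfl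

lemma rankOneProj_mul_eq_zero {x y : H} (h : ⟪x, y⟫ = 0) :
    rankOneProj x * rankOneProj y = 0 := by
  ext z
  simp [ContinuousLinearMap.mul_apply, rankOneProj_apply, inner_smul_right, h]

end Aux

/-- Let `E, F` be orthogonal projections on a separable complex Hilbert space
whose ranges have the same Hilbert dimension (there is a linear isometric isomorphism between
them), with `E ∧ F = 0`, with `F e ≠ 0` for every unit vector `e ∈ ran E` and `E f ≠ 0` for
every unit vector `f ∈ ran F`, and such that `ran E` admits an orthonormal basis of
eigenvectors of `EFE`.  Then there is an orthonormal basis `{e_j}` of `ran E` such that the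
vectors `f_j := F e_j / ‖F e_j‖` form an orthonormal basis of `ran F` with
`P_{f_j} P_{e_k} = 0` for `j ≠ k` and `P_{f_j} P_{e_j} ≠ 0`; moreover, given `{P_{e_j}}`, the
decomposition `{P_{f_j}}` of `F` with these properties is unique. -/
theorem statement12 {H : Type*} [NormedAddCommGroup H] [InnerProductSpace ℂ H] [CompleteSpace H]
    [TopologicalSpace.SeparableSpace H]
    (E F : H →L[ℂ] H) (hE : IsOrthogonalProjection E) (hF : IsOrthogonalProjection F)
    (hdim : Nonempty
      (↥(LinearMap.range (E : H →ₗ[ℂ] H)) ≃ₗᵢ[ℂ] ↥(LinearMap.range (F : H →ₗ[ℂ] H))))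
    (hmeet : LinearMap.range (E : H →ₗ[ℂ] H) ⊓ LinearMap.range (F : H →ₗ[ℂ] H) = ⊥)
    (hFe : ∀ e ∈ LinearMap.range (E : H →ₗ[ℂ] H), ‖e‖ = 1 → F e ≠ 0)
    (hEf : ∀ f ∈ LinearMap.range (F : H →ₗ[ℂ] H), ‖f‖ = 1 → E f ≠ 0)
    (hpp : ∃ (J : Type) (v : J → H) (μ : J → ℂ), Orthonormal ℂ v ∧
      (∀ j, v j ∈ LinearMap.range (E : H →ₗ[ℂ] H)) ∧
      (Submodule.span ℂ (Set.range v)).topologicalClosure =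
        LinearMap.range (E : H →ₗ[ℂ] H) ∧
      ∀ j, (E * F * E) (v j) = μ j • v j) :
    ∃ (J : Type) (e f : J → H),
      Orthonormal ℂ e ∧ (∀ j, e j ∈ LinearMap.range (E : H →ₗ[ℂ] H)) ∧
      (Submodule.span ℂ (Set.range e)).topologicalClosure =
        LinearMap.range (E : H →ₗ[ℂ] H) ∧
      (∀ j, F (e j) ≠ 0) ∧ (∀ j, f j = ‖F (e j)‖⁻¹ • F (e j)) ∧
      Orthonormal ℂ f ∧ (∀ j, f j ∈ LinearMap.range (F : H →ₗ[ℂ] H)) ∧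
      (Submodule.span ℂ (Set.range f)).topologicalClosure =
        LinearMap.range (F : H →ₗ[ℂ] H) ∧
      (∀ j k, j ≠ k → rankOneProj (f j) * rankOneProj (e k) = 0) ∧
      (∀ j, rankOneProj (f j) * rankOneProj (e j) ≠ 0) ∧
      (∀ g : J → H, Orthonormal ℂ g →
        (∀ j, g j ∈ LinearMap.range (F : H →ₗ[ℂ] H)) →
        (Submodule.span ℂ (Set.range g)).topologicalClosure =
          LinearMap.range (F : H →ₗ[ℂ] H) →
        (∀ j k, j ≠ k → rankOneProj (g j) * rankOneProj (e k) = 0) →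
        (∀ j, rankOneProj (g j) * rankOneProj (e j) ≠ 0) →
        ∀ j, rankOneProj (g j) = rankOneProj (f j)) := by
  classical
  obtain ⟨J, e, μ, he_on, he_mem, he_span, he_eig⟩ := hpp
  have he_norm : ∀ j, ‖e j‖ = 1 := he_on.1
  have he_inner : ∀ i k, (inner ℂ (e i) (e k) : ℂ) = if i = k then 1 else 0 :=
    orthonormal_iff_ite.mp he_on
  have hFe0 : ∀ j, F (e j) ≠ 0 := fun j => hFe _ (he_mem j) (he_norm j)
  have hnFe : ∀ j, (‖F (e j)‖ : ℝ) ≠ 0 := fun j => norm_ne_zero_iff.mpr (hFe0 j)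
  set f : J → H := fun j => ‖F (e j)‖⁻¹ • F (e j) with hf_def
  have hEe : ∀ j, E (e j) = e j := fun j => hE.mem_range_iff.mp (he_mem j)
  -- the key eigenvalue computation
  have hEFe : ∀ k, E (F (e k)) = μ k • e k := by
    intro k
    have h := he_eig k
    simpa [ContinuousLinearMap.mul_apply, hEe k] using h
  have hkey : ∀ j k, (inner ℂ (e j) (F (e k)) : ℂ) = μ k * inner ℂ (e j) (e k) := by
    intro j k
    calc (inner ℂ (e j) (F (e k)) : ℂ) = inner ℂ (E (e j)) (F (e k)) := by rw [hEe j]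
      _ = inner ℂ (e j) (E (F (e k))) := hE.symm _ _
      _ = inner ℂ (e j) ((μ k : ℂ) • e k) := by rw [hEFe k]
      _ = μ k * inner ℂ (e j) (e k) := inner_smul_right _ _ _
  have hFF : ∀ x, F (F x) = F x := hF.idem
  have hinnerFF : ∀ j k, (inner ℂ (F (e j)) (F (e k)) : ℂ) = μ k * inner ℂ (e j) (e k) := by
    intro j k
    rw [hF.symm, hFF, hkey]
  have hinnerFe : ∀ j k, (inner ℂ (F (e j)) (e k) : ℂ) = μ k * inner ℂ (e j) (e k) := by
    intro j k
    rw [hF.symm, hkey]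
  -- inner products with f
  have hf_coe : ∀ j, f j = ((‖F (e j)‖⁻¹ : ℝ) : ℂ) • F (e j) := by
    intro j; rw [Complex.coe_smul]
  have hf_inner_left : ∀ j (z : H),
      (inner ℂ (f j) z : ℂ) = ((‖F (e j)‖⁻¹ : ℝ) : ℂ) * inner ℂ (F (e j)) z := by
    intro j z
    rw [hf_coe j, inner_smul_left, Complex.conj_ofReal]
  have hf_norm : ∀ j, ‖f j‖ = 1 := by
    intro j
    rw [hf_def]
    simp only [norm_smul, Real.norm_eq_abs, abs_of_nonneg (inv_nonneg.mpr (norm_nonneg _))]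
    exact inv_mul_cancel₀ (hnFe j)
  have hf_on : Orthonormal ℂ f := by
    refine ⟨hf_norm, ?_⟩
    intro i k hik
    rw [hf_inner_left, hf_coe k, inner_smul_right, hinnerFF, he_inner, if_neg hik]
    ring
  have hff_inner : ∀ i k, (inner ℂ (f i) (f k) : ℂ) = if i = k then 1 else 0 :=
    orthonormal_iff_ite.mp hf_on
  have hf_mem : ∀ j, f j ∈ LinearMap.range (F : H →ₗ[ℂ] H) := by
    intro j
    rw [hf_coe j]
    exact Submodule.smul_mem _ _ ⟨e j, rfl⟩
  -- orthogonality to all e j forces E u = 0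
  have hperp_toE : ∀ u : H, (∀ j, (inner ℂ (e j) u : ℂ) = 0) → E u = 0 := by
    intro u hu
    have hker : LinearMap.range (E : H →ₗ[ℂ] H) ≤ (innerSL ℂ u).ker := by
      rw [← he_span]
      apply Submodule.topologicalClosure_minimal
      · rw [Submodule.span_le]
        rintro _ ⟨j, rfl⟩
        exact inner_eq_zero_symm.mpr (hu j)
      · exact ContinuousLinearMap.isClosed_ker (innerSL ℂ u)
    have hEu : (inner ℂ u (E u) : ℂ) = 0 := hker ⟨u, rfl⟩
    have : (inner ℂ (E u) (E u) : ℂ) = 0 := by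
      rw [hE.symm, hE.idem, hEu]
    exact inner_self_eq_zero.mp this
  have hF_zero : ∀ u : H, u ∈ LinearMap.range (F : H →ₗ[ℂ] H) → E u = 0 → u = 0 := by
    intro u hu hEu
    by_contra hne
    have hw : ‖(‖u‖⁻¹ • u : H)‖ = 1 := norm_smul_inv_norm hne
    have hwmem : (‖u‖⁻¹ • u : H) ∈ LinearMap.range (F : H →ₗ[ℂ] H) := by
      rw [← Complex.coe_smul]
      exact Submodule.smul_mem _ _ hu
    have := hEf _ hwmem hw
    apply this
    rw [← Complex.coe_smul, map_smul, hEu, smul_zero]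
  have hperp_f_zero : ∀ u : H, u ∈ LinearMap.range (F : H →ₗ[ℂ] H) →
      (∀ j, (inner ℂ (f j) u : ℂ) = 0) → u = 0 := by
    intro u hu h
    have hFu : F u = u := hF.mem_range_iff.mp hu
    have he_u : ∀ j, (inner ℂ (e j) u : ℂ) = 0 := by
      intro j
      have h1 := h j
      rw [hf_inner_left, hF.symm, hFu] at h1
      rcases mul_eq_zero.mp h1 with h2 | h2
      · exact absurd (Complex.ofReal_eq_zero.mp h2) (inv_ne_zero (hnFe j))
      · exact h2
    exact hF_zero u hu (hperp_toE u he_u)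
  -- totality of f in ran F
  have hf_span : (Submodule.span ℂ (Set.range f)).topologicalClosure =
      LinearMap.range (F : H →ₗ[ℂ] H) := by
    set S := (Submodule.span ℂ (Set.range f)).topologicalClosure with hS
    have hS_le : S ≤ LinearMap.range (F : H →ₗ[ℂ] H) := by
      apply Submodule.topologicalClosure_minimal
      · rw [Submodule.span_le]
        rintro _ ⟨j, rfl⟩
        exact hf_mem j
      · exact hF.range_isClosed
    refine le_antisymm hS_le ?_
    intro x hx
    haveI : CompleteSpace S := (Submodule.isClosed_topologicalClosure _).completeSpace_coe
    set y := x - (S.orthogonalProjectionOnto x : H) with hy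
    have hy_orth : y ∈ Sᗮ := S.sub_starProjection_mem_orthogonal x
    have hy_mem : y ∈ LinearMap.range (F : H →ₗ[ℂ] H) :=
      Submodule.sub_mem _ hx (hS_le (S.orthogonalProjectionOnto x).2)
    have hy_perp : ∀ j, (inner ℂ (f j) y : ℂ) = 0 := by
      intro j
      exact Submodule.inner_right_of_mem_orthogonal
        (Submodule.le_topologicalClosure _ (Submodule.subset_span (Set.mem_range_self j))) hy_orth
    have hy0 : y = 0 := hperp_f_zero y hy_mem hy_perp
    have : x = (S.orthogonalProjectionOnto x : H) := by
      have := sub_eq_zero.mp hy0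
      exact this
    rw [this]
    exact (S.orthogonalProjectionOnto x).2
  -- inner products of f with e
  have hfe_inner : ∀ j k, (inner ℂ (f j) (e k) : ℂ) =
      ((‖F (e j)‖⁻¹ : ℝ) : ℂ) * (μ k * inner ℂ (e j) (e k)) := by
    intro j k
    rw [hf_inner_left, hinnerFe]
  have hfe_diag_ne : ∀ j, (inner ℂ (f j) (e j) : ℂ) ≠ 0 := by
    intro j
    have h1 : (inner ℂ (F (e j)) (e j) : ℂ) = inner ℂ (F (e j)) (F (e j)) := by
      rw [hinnerFe, hinnerFF]
    have h2 : (inner ℂ (F (e j)) (e j) : ℂ) ≠ 0 := by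
      rw [h1]
      exact fun h => hFe0 j (inner_self_eq_zero.mp h)
    rw [hf_inner_left]
    exact mul_ne_zero (Complex.ofReal_ne_zero.mpr (inv_ne_zero (hnFe j))) h2
  refine ⟨J, e, f, he_on, he_mem, he_span, hFe0, fun j => rfl, hf_on, hf_mem, hf_span,
    ?_, ?_, ?_⟩
  · -- zero products for j ≠ k
    intro j k hjk
    apply rankOneProj_mul_eq_zero
    rw [hfe_inner, he_inner, if_neg hjk]
    ring
  · -- nonzero diagonal products
    intro j h
    have happ := congrArg (fun T : H →L[ℂ] H => T (e j)) h
    simp only [ContinuousLinearMap.mul_apply, ContinuousLinearMap.zero_apply] at happ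
    rw [rankOneProj_apply (e j), he_inner, if_pos rfl, one_smul, rankOneProj_apply] at happ
    rcases smul_eq_zero.mp happ with h2 | h2
    · exact hfe_diag_ne j h2
    · exact hFe0 j (by simpa [hf_def, smul_eq_zero, inv_eq_zero, norm_eq_zero] using h2)
  · -- uniqueness
    intro g hg_on hg_mem hg_span hg_zero hg_ne j
    have hg_norm : ‖g j‖ = 1 := hg_on.1 j
    have hg_ne0 : g j ≠ 0 := fun h => by simp [h] at hg_norm
    have hFg : F (g j) = g j := hF.mem_range_iff.mp (hg_mem j)
    have hg_e : ∀ k, j ≠ k → (inner ℂ (g j) (e k) : ℂ) = 0 := by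
      intro k hjk
      have happ := congrArg (fun T : H →L[ℂ] H => T (e k)) (hg_zero j k hjk)
      simp only [ContinuousLinearMap.mul_apply, ContinuousLinearMap.zero_apply] at happ
      rw [rankOneProj_apply (e k), he_inner, if_pos rfl, one_smul, rankOneProj_apply] at happ
      rcases smul_eq_zero.mp happ with h2 | h2
      · exact h2
      · exact absurd h2 hg_ne0
    have hf_g : ∀ k, k ≠ j → (inner ℂ (f k) (g j) : ℂ) = 0 := by
      intro k hkj
      rw [hf_inner_left, hF.symm, hFg]
      have : (inner ℂ (e k) (g j) : ℂ) = 0 := by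
        rw [← inner_conj_symm, hg_e k hkj.symm, map_zero]
      rw [this, mul_zero]
    set c : ℂ := inner ℂ (f j) (g j) with hc_def
    have hu : g j - c • f j = 0 := by
      apply hperp_f_zero
      · exact Submodule.sub_mem _ (hg_mem j) (Submodule.smul_mem _ _ (hf_mem j))
      · intro k
        rw [inner_sub_right, inner_smul_right]
        by_cases hkj : k = j
        · subst hkj
          rw [← hc_def, hff_inner, if_pos rfl, mul_one, sub_self]
        · rw [hf_g k hkj, hff_inner, if_neg hkj, mul_zero, sub_zero]
    have hgj : g j = c • f j := sub_eq_zero.mp hu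
    have hc_norm : ‖c‖ = 1 := by
      have : ‖g j‖ = ‖c‖ * ‖f j‖ := by rw [hgj, norm_smul]
      rw [hg_norm, hf_norm j, mul_one] at this
      exact this.symm
    have hcc : (starRingEnd ℂ) c * c = 1 := by
      rw [mul_comm, Complex.mul_conj]
      norm_cast
      rw [Complex.normSq_eq_norm_sq, hc_norm, one_pow]
    ext z
    rw [rankOneProj_apply, rankOneProj_apply, hgj, inner_smul_left, smul_smul,
      mul_comm ((starRingEnd ℂ) c * _) c, ← mul_assoc, mul_comm c, hcc, one_mul]
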